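/- Let k be a field of characteristic p > 0 and G a finite group. Every indecomposable finite-dimensional kG-module M has a vertex: a subgroup V ≤ G minimal such that M is a direct summand of Ind^G_V Res^G_V M; moreover any two vertices of M are conjugate in G, and every vertex of M is a p-subgroup of G. -/

import Mathlib

namespace Stmt

variable {k : Type*} [CommRing k]
variable {Γ : Type*} [Group Γ] (H : Subgroup Γ)
variable {N : Type*} [AddCommGroup N] [Module k N]
variable (ρ : Representation k H N)

/-- Concrete model of the induced module `kΓ ⊗_{kH} N`: functions `f : Γ → N`
with `f (g * h) = ρ h⁻¹ (f g)`; the elementary tensor `g ⊗ n` corresponds to the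
function supported on the coset `g H` with value `ρ (x⁻¹ g) n` at `x ∈ g H`. -/
def Ind : Submodule k (Γ → N) where
  carrier := {f | ∀ (g : Γ) (h : H), f (g * h) = ρ h⁻¹ (f g)}
  add_mem' := by
    intro a b ha hb g h
    simp only [Pi.add_apply, ha g h, hb g h, map_add]
  zero_mem' := by intro g h; simp
  smul_mem' := by
    intro c f hf g h
    simp only [Pi.smul_apply, hf g h, map_smul]

theorem mem_Ind {f : Γ → N} : f ∈ Ind H ρ ↔ ∀ (g : Γ) (h : H), f (g * h) = ρ h⁻¹ (f g) :=
  Iff.rfl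

/-- The representation of `Γ` on the induced module, `(g • f) x = f (g⁻¹ x)`. -/
def indRep : Representation k Γ (Ind H ρ) where
  toFun g :=
    { toFun := fun f => ⟨fun x => f.1 (g⁻¹ * x), fun x h => by
        simpa [mul_assoc] using f.2 (g⁻¹ * x) h⟩
      map_add' := fun f f' => rfl
      map_smul' := fun c f => rfl }
  map_one' := by
    refine LinearMap.ext fun f => Subtype.ext (funext fun x => ?_)
    simp
  map_mul' g g' := by
    refine LinearMap.ext fun f => Subtype.ext (funext fun x => ?_)
    simp [mul_assoc]

/-- The elementary tensor `g ⊗ n` in the induced module. -/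
def elt [DecidablePred (· ∈ H)] (g : Γ) (n : N) : Ind H ρ :=
  ⟨fun x => if hx : x⁻¹ * g ∈ H then ρ ⟨x⁻¹ * g, hx⟩ n else 0, by
    intro x h
    dsimp only
    have key : (x * (h : Γ))⁻¹ * g = (h⁻¹ : H) * (x⁻¹ * g) := by
      simp [mul_inv_rev, mul_assoc]
    by_cases hx : x⁻¹ * g ∈ H
    · have hmem : (x * (h : Γ))⁻¹ * g ∈ H := by
        rw [key]; exact H.mul_mem (H.inv_mem h.2) hx
      simp only [hmem, hx, dif_pos]
      have : (⟨(x * (h : Γ))⁻¹ * g, hmem⟩ : H) = h⁻¹ * ⟨x⁻¹ * g, hx⟩ := by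
        ext; simpa using key
      rw [this, map_mul]
      rfl
    · have hmem : ¬ ((x * (h : Γ))⁻¹ * g ∈ H) := by
        rw [key]
        intro hc
        exact hx (by simpa using H.mul_mem (H.inv_mem (H.inv_mem h.2)) hc)
      rw [dif_neg hmem, dif_neg hx, map_zero]⟩


section RelProj

variable {M : Type*} [AddCommGroup M] [Module k M]

/-- `M` (with `Γ`-action `σ`) is relatively `V`-projective: it is a direct summand
of the induced module `Ind_V^Γ (Res_V^Γ M)` via `Γ`-equivariant maps.  (For a module
this is equivalent to being a retract of a module induced from `V`.) -/
def IsRelativelyProjective (V : Subgroup Γ) (σ : Representation k Γ M) : Prop :=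
  ∃ (p : (Ind V (σ.comp V.subtype) : Submodule k (Γ → M)) →ₗ[k] M)
    (s : M →ₗ[k] (Ind V (σ.comp V.subtype) : Submodule k (Γ → M))),
    (∀ (g : Γ) (f : Ind V (σ.comp V.subtype)),
        p (indRep V (σ.comp V.subtype) g f) = σ g (p f)) ∧
    (∀ (g : Γ) (m : M), s (σ g m) = indRep V (σ.comp V.subtype) g (s m)) ∧
    p.comp s = LinearMap.id

/-- `M` (with `Γ`-action `σ`) is relatively projective with respect to a family of
subgroups `X i`: it is a direct summand of the direct sum over `i` of the modules
induced from `X i`, via `Γ`-equivariant maps. -/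
def IsRelativelyProjectiveFamily {ι : Type*} (X : ι → Subgroup Γ)
    (σ : Representation k Γ M) : Prop :=
  ∃ (p : (Π i : ι, (Ind (X i) (σ.comp (X i).subtype) : Submodule k (Γ → M))) →ₗ[k] M)
    (s : M →ₗ[k] (Π i : ι, (Ind (X i) (σ.comp (X i).subtype) : Submodule k (Γ → M)))),
    (∀ (g : Γ) (v : Π i : ι, (Ind (X i) (σ.comp (X i).subtype) : Submodule k (Γ → M))),
        p (fun i => indRep (X i) (σ.comp (X i).subtype) g (v i)) = σ g (p v)) ∧
    (∀ (g : Γ) (m : M) (i : ι),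
        s (σ g m) i = indRep (X i) (σ.comp (X i).subtype) g (s m i)) ∧
    p.comp s = LinearMap.id

/-- A representation is indecomposable: nonzero, and its only `Γ`-equivariant
idempotent endomorphisms are `0` and the identity. -/
def IsIndecomposableRep (σ : Representation k Γ M) : Prop :=
  Nontrivial M ∧
    ∀ e : M →ₗ[k] M, (∀ (g : Γ) (m : M), e (σ g m) = σ g (e m)) →
      e.comp e = e → e = 0 ∨ e = LinearMap.id

variable {M' : Type*} [AddCommGroup M'] [Module k M']

/-- `M` is a direct summand of `M'`, via `Γ`-equivariant maps. -/
def IsSummandOf (σ : Representation k Γ M) (τ : Representation k Γ M') : Prop :=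
  ∃ (p : M' →ₗ[k] M) (s : M →ₗ[k] M'),
    (∀ (g : Γ) (m' : M'), p (τ g m') = σ g (p m')) ∧
    (∀ (g : Γ) (m : M), s (σ g m) = τ g (s m)) ∧
    p.comp s = LinearMap.id

/-- Isomorphism of representations. -/
def IsIsoRep (σ : Representation k Γ M) (τ : Representation k Γ M') : Prop :=
  ∃ e : M ≃ₗ[k] M', ∀ (g : Γ) (m : M), e (σ g m) = τ g (e m)

end RelProj

set_option linter.unusedSectionVars false
section Aux

variable {k : Type*} [CommRing k]
variable {G : Type*} [Group G] [Fintype G]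
variable {M : Type*} [AddCommGroup M] [Module k M]
variable (σ : Representation k G M)

/-- Conjugate of an endomorphism by `σ x`. -/
def cj (x : G) (φ : M →ₗ[k] M) : M →ₗ[k] M := σ x ∘ₗ φ ∘ₗ σ x⁻¹

lemma cj_apply (x : G) (φ : M →ₗ[k] M) (m : M) : cj σ x φ m = σ x (φ (σ x⁻¹ m)) := rfl

lemma σ_inv_apply (x : G) (m : M) : σ x⁻¹ (σ x m) = m := by
  rw [← Module.End.mul_apply, ← map_mul, inv_mul_cancel, map_one, Module.End.one_apply]

lemma σ_apply_inv (x : G) (m : M) : σ x (σ x⁻¹ m) = m := by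
  rw [← Module.End.mul_apply, ← map_mul, mul_inv_cancel, map_one, Module.End.one_apply]

lemma cj_cj (x y : G) (φ : M →ₗ[k] M) : cj σ x (cj σ y φ) = cj σ (x * y) φ := by
  ext m
  simp only [cj_apply, mul_inv_rev, map_mul, Module.End.mul_apply]

lemma cj_id (x : G) : cj σ x (LinearMap.id : M →ₗ[k] M) = LinearMap.id := by
  ext m; simp [cj_apply, σ_apply_inv]

lemma cj_sum {ι : Type*} (s : Finset ι) (x : G) (θ : ι → (M →ₗ[k] M)) :
    cj σ x (∑ i ∈ s, θ i) = ∑ i ∈ s, cj σ x (θ i) := by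
  ext m
  simp [cj_apply, LinearMap.sum_apply, map_sum]

/-- `φ` commutes with the action of all elements of `V`. -/
def EquivOn (V : Subgroup G) (φ : M →ₗ[k] M) : Prop :=
  ∀ v ∈ V, ∀ m, φ (σ v m) = σ v (φ m)

/-- `φ` commutes with the action of all of `G`. -/
def GEquiv (φ : M →ₗ[k] M) : Prop := ∀ (g : G) (m : M), φ (σ g m) = σ g (φ m)

lemma GEquiv.equivOn {σ : Representation k G M} {φ : M →ₗ[k] M} (h : GEquiv σ φ)
    (V : Subgroup G) : EquivOn σ V φ :=
  fun v _ m => h v m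

lemma EquivOn.cj_eq {σ : Representation k G M} {V : Subgroup G} {φ : M →ₗ[k] M}
    (h : EquivOn σ V φ) {v : G} (hv : v ∈ V) : cj σ v φ = φ := by
  ext m
  rw [cj_apply, ← h v hv, σ_apply_inv]

lemma GEquiv.cj_eq {σ : Representation k G M} {φ : M →ₗ[k] M} (h : GEquiv σ φ) (g : G) :
    cj σ g φ = φ :=
  EquivOn.cj_eq (fun v _ m => h v m) (Subgroup.mem_top g)

lemma gEquiv_of_cj {φ : M →ₗ[k] M} (h : ∀ g : G, cj σ g φ = φ) : GEquiv σ φ := by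
  intro g m
  conv_lhs => rw [← h g]
  rw [cj_apply, σ_inv_apply]

lemma cj_out {V : Subgroup G} {φ : M →ₗ[k] M} (h : EquivOn σ V φ) (x : G) :
    cj σ (Quotient.out (QuotientGroup.mk x : G ⧸ V)) φ = cj σ x φ := by
  obtain ⟨v, hv⟩ := QuotientGroup.mk_out_eq_mul V x
  rw [hv, ← cj_cj, h.cj_eq v.2]

lemma cj_out_eq {V : Subgroup G} {φ : M →ₗ[k] M} (h : EquivOn σ V φ) {c : G ⧸ V} {x : G}
    (hx : QuotientGroup.mk x = c) : cj σ (Quotient.out c) φ = cj σ x φ := by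
  subst hx; exact cj_out σ h x

open scoped Classical in
/-- The relative trace from `V` to `G` of an endomorphism. -/
noncomputable def trG (V : Subgroup G) (φ : M →ₗ[k] M) : M →ₗ[k] M :=
  ∑ c : G ⧸ V, cj σ (Quotient.out c) φ

lemma smul_mk (V : Subgroup G) (g x : G) :
    g • (QuotientGroup.mk x : G ⧸ V) = QuotientGroup.mk (g * x) := rfl

open scoped Classical in
lemma trG_gequiv {V : Subgroup G} {φ : M →ₗ[k] M} (h : EquivOn σ V φ) :
    GEquiv σ (trG σ V φ) := by
  apply gEquiv_of_cj
  intro g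
  rw [trG, cj_sum]
  refine Fintype.sum_bijective (fun c : G ⧸ V => g • c) (MulAction.bijective g) _ _ (fun c => ?_)
  rw [cj_cj]
  refine (cj_out_eq σ h ?_).symm
  rw [← smul_mk, QuotientGroup.out_eq']


lemma gequiv_pow {σ : Representation k G M} {f : M →ₗ[k] M} (hf : GEquiv σ f) (n : ℕ) :
    GEquiv σ (f ^ n) := by
  induction n with
  | zero => intro g m; simp [Module.End.one_eq_id]
  | succ n ih =>
    intro g m
    rw [pow_succ, Module.End.mul_apply, Module.End.mul_apply, hf g m, ih g (f m)]

lemma gequiv_comp {σ : Representation k G M} {f f' : M →ₗ[k] M} (hf : GEquiv σ f)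
    (hf' : GEquiv σ f') : GEquiv σ (f ∘ₗ f') := by
  intro g m
  rw [LinearMap.comp_apply, LinearMap.comp_apply, hf' g m, hf g (f' m)]

lemma gequiv_sum {σ : Representation k G M} {ι : Type*} {s : Finset ι} {f : ι → (M →ₗ[k] M)}
    (hf : ∀ i ∈ s, GEquiv σ (f i)) : GEquiv σ (∑ i ∈ s, f i) := by
  intro g m
  rw [LinearMap.sum_apply, LinearMap.sum_apply, map_sum]
  exact Finset.sum_congr rfl fun i hi => hf i hi g m

section Field
variable {k : Type*} [Field k]
variable {G : Type*} [Group G] [Fintype G]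
variable {M : Type*} [AddCommGroup M] [Module k M] [Module.Finite k M]
variable (σ : Representation k G M)

/-- Fitting's lemma: a `G`-equivariant endomorphism of an indecomposable module
is bijective or nilpotent. -/
lemma bijective_or_nilpotent (hM : IsIndecomposableRep σ) {f : M →ₗ[k] M}
    (hf : GEquiv σ f) : Function.Bijective f ∨ ∃ n : ℕ, 1 ≤ n ∧ f ^ n = 0 := by
  obtain ⟨n, hn, hc⟩ :
      ∃ n : ℕ, 1 ≤ n ∧ IsCompl (LinearMap.ker (f ^ n)) (LinearMap.range (f ^ n)) := by
    obtain ⟨n, hn⟩ := ((Filter.eventually_ge_atTop 1).and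
      f.eventually_isCompl_ker_pow_range_pow).exists
    exact ⟨n, hn.1, hn.2⟩
  set p := LinearMap.ker (f ^ n) with hp
  set q := LinearMap.range (f ^ n) with hq
  have hfn : GEquiv σ (f ^ n) := gequiv_pow hf n
  -- the projection onto `q` along `p`
  set π : M →ₗ[k] M := q.subtype ∘ₗ (Submodule.projectionOnto q p hc.symm) with hπ
  have hπq : ∀ x ∈ q, π x = x := by
    intro x hx
    simp [hπ, Submodule.projectionOnto_apply_of_mem_left hc.symm hx]
  have hπp : ∀ x ∈ p, π x = 0 := by
    intro x hx
    simp [hπ, Submodule.projectionOnto_apply_of_mem_right hc.symm hx]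
  have hdecomp : ∀ m : M, ∃ a ∈ p, ∃ b ∈ q, m = a + b := by
    intro m
    have : ((Submodule.projectionOnto p q hc) m : M) + ((Submodule.projectionOnto q p hc.symm) m : M) = m :=
      Submodule.projection_add_projection_eq_self hc m
    exact ⟨_, ((Submodule.projectionOnto p q hc) m).2, _,
      ((Submodule.projectionOnto q p hc.symm) m).2, this.symm⟩
  have hgp : ∀ (g : G) (x : M), x ∈ p → σ g x ∈ p := by
    intro g x hx
    rw [hp, LinearMap.mem_ker] at hx ⊢
    rw [hfn g x, hx, map_zero]

  have hgq : ∀ (g : G) (x : M), x ∈ q → σ g x ∈ q := by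
    intro g x hx
    rw [hq, LinearMap.mem_range] at hx ⊢
    obtain ⟨y, hy⟩ := hx
    exact ⟨σ g y, by rw [hfn g y, hy]⟩
  have hπequiv : ∀ (g : G) (m : M), π (σ g m) = σ g (π m) := by
    intro g m
    obtain ⟨a, ha, b, hb, rfl⟩ := hdecomp m
    rw [map_add, map_add, map_add, hπp a ha, hπq b hb, hπp _ (hgp g a ha),
      hπq _ (hgq g b hb)]
    simp
  have hπidem : π.comp π = π := by
    ext m
    exact hπq (π m) ((Submodule.projectionOnto q p hc.symm) m).2
  rcases hM.2 π hπequiv hπidem with h0 | hid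
  · -- range (f ^ n) = 0, so f is nilpotent
    right
    refine ⟨n, hn, ?_⟩
    rw [← LinearMap.range_eq_bot]
    rw [Submodule.eq_bot_iff]
    intro x hx
    have := hπq x hx
    rw [h0] at this
    simpa using this.symm
  · -- ker (f ^ n) = 0, so f is injective, hence bijective
    left
    have hker : ∀ x ∈ p, x = (0 : M) := by
      intro x hx
      have := hπp x hx
      rw [hid] at this
      simpa using this
    have hinj : Function.Injective f := by
      rw [← LinearMap.ker_eq_bot, Submodule.eq_bot_iff]
      intro x hx
      rw [LinearMap.mem_ker] at hx
      refine hker x ?_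
      rw [hp, LinearMap.mem_ker]
      obtain ⟨m, rfl⟩ := Nat.exists_eq_add_of_le hn
      rw [add_comm, pow_succ, Module.End.mul_apply, hx, map_zero]
    exact ⟨hinj, LinearMap.injective_iff_surjective.mp hinj⟩

universe u_ι in
lemma exists_bijective_aux (hM : IsIndecomposableRep σ) :
    ∀ (n : ℕ) {ι : Type u_ι} (s : Finset ι), s.card = n →
      ∀ e : ι → (M →ₗ[k] M), (∀ i ∈ s, GEquiv σ (e i)) →
        (∑ i ∈ s, e i = LinearMap.id) → ∃ i ∈ s, Function.Bijective (e i) := by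
  intro n
  induction n using Nat.strong_induction_on with
  | _ n ih =>
    intro ι s hcard e he hsum
    classical
    have hM1 : Nontrivial M := hM.1
    have hsne : s.Nonempty := by
      rcases Finset.eq_empty_or_nonempty s with rfl | h
      · exfalso
        rw [Finset.sum_empty] at hsum
        obtain ⟨x, y, hxy⟩ := hM1
        have hx := congrArg (fun φ : M →ₗ[k] M => φ (x - y)) hsum
        simp only [LinearMap.zero_apply, LinearMap.id_apply] at hx
        exact hxy (by rw [eq_comm, sub_eq_zero] at hx; exact hx)
      · exact h
    obtain ⟨i₀, hi₀⟩ := hsne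
    by_cases hbij : Function.Bijective (e i₀)
    · exact ⟨i₀, hi₀, hbij⟩
    · -- `e i₀` is nilpotent; multiply through by the inverse of `1 - e i₀`
      obtain ⟨m, -, hm⟩ :=
        (bijective_or_nilpotent σ hM (he i₀ hi₀)).resolve_left hbij
      set x : M →ₗ[k] M := e i₀ with hxdef
      set u : M →ₗ[k] M := ∑ j ∈ Finset.range m, x ^ j with hu
      have hux : u * (1 - x) = 1 := by
        have h1 : u * (x - 1) = x ^ m - 1 := geom_sum_mul x m
        have h2 : u * (1 - x) = -(u * (x - 1)) := by noncomm_ring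
        rw [h2, h1, hm]; simp
    -- and the reverse
      have hxu : (1 - x) * u = 1 := by
        have h1 : (x - 1) * u = x ^ m - 1 := mul_geom_sum x m
        have h2 : (1 - x) * u = -((x - 1) * u) := by noncomm_ring
        rw [h2, h1, hm]; simp
      have hubij : Function.Bijective u := by
        constructor
        · intro a b hab
          have := congrArg (fun φ : M →ₗ[k] M => φ a) hxu
          have h2 := congrArg (fun φ : M →ₗ[k] M => φ b) hxu
          simp only [Module.End.mul_apply, Module.End.one_apply] at this h2
          rw [← this, ← h2, hab]
        · intro b
          refine ⟨(1 - x) b, ?_⟩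
          have := congrArg (fun φ : M →ₗ[k] M => φ b) hux
          simpa only [Module.End.mul_apply, Module.End.one_apply] using this
      have hrest : ∑ i ∈ s.erase i₀, e i = 1 - x := by
        have := Finset.add_sum_erase s e hi₀
        rw [hsum] at this
        rw [← Module.End.one_eq_id] at this
        rw [eq_sub_iff_add_eq, add_comm, this]
      have huequiv : GEquiv σ u := by
        rw [hu]
        exact gequiv_sum fun j _ => gequiv_pow (he i₀ hi₀) j
      have hsum' : ∑ i ∈ s.erase i₀, u ∘ₗ e i = LinearMap.id := by
        have : ∑ i ∈ s.erase i₀, u ∘ₗ e i = u * ∑ i ∈ s.erase i₀, e i := by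
          rw [Finset.mul_sum]; rfl
        rw [this, hrest, hux, Module.End.one_eq_id]
      have hcard' : (s.erase i₀).card < n := by
        rw [← hcard]
        exact Finset.card_erase_lt_of_mem hi₀
      obtain ⟨i, hi, hbij'⟩ := ih _ hcard' (s.erase i₀) rfl (fun i => u ∘ₗ e i)
        (fun i hi => gequiv_comp huequiv (he i (Finset.mem_of_mem_erase hi))) hsum'
      refine ⟨i, Finset.mem_of_mem_erase hi, ?_, ?_⟩
      · intro a b hab
        exact hbij'.1 (by simp only [LinearMap.comp_apply, hab])
      · intro b
        obtain ⟨a, ha⟩ := hbij'.2 (u b)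
        exact ⟨a, hubij.1 ha⟩

lemma exists_bijective_of_sum_eq_id (hM : IsIndecomposableRep σ) {ι : Type*}
    (s : Finset ι) (e : ι → (M →ₗ[k] M)) (he : ∀ i ∈ s, GEquiv σ (e i))
    (hsum : ∑ i ∈ s, e i = LinearMap.id) : ∃ i ∈ s, Function.Bijective (e i) :=
  exists_bijective_aux σ hM s.card s rfl e he hsum

end Field

section Higman
variable {k : Type*} [CommRing k]
variable {G : Type*} [Group G] [Fintype G]
variable {M : Type*} [AddCommGroup M] [Module k M]
variable (σ : Representation k G M) (V : Subgroup G)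

lemma ind_term_eq (f : (Ind V (σ.comp V.subtype) : Submodule k (G → M))) {x y : G}
    (hxy : (QuotientGroup.mk x : G ⧸ V) = QuotientGroup.mk y) :
    σ x (f.1 x) = σ y (f.1 y) := by
  have hv : x⁻¹ * y ∈ V := QuotientGroup.eq.mp hxy
  have hy : y = x * (⟨x⁻¹ * y, hv⟩ : V) := by
    simp [mul_assoc, mul_inv_cancel_left]
  have hcoe : (σ.comp V.subtype) (⟨x⁻¹ * y, hv⟩ : V)⁻¹ = σ (x⁻¹ * y)⁻¹ := rfl
  have hv' : ((⟨x⁻¹ * y, hv⟩ : V) : G) = x⁻¹ * y := rfl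
  rw [hy, f.2 x ⟨x⁻¹ * y, hv⟩, hcoe, hv', map_mul, Module.End.mul_apply, σ_apply_inv]

open scoped Classical in
lemma relProj_of_witness (φ : M →ₗ[k] M) (hφ : EquivOn σ V φ)
    (htr : trG σ V φ = LinearMap.id) : IsRelativelyProjective V σ := by
  classical
  -- the section
  refine ⟨{ toFun := fun f => ∑ c : G ⧸ V, σ (Quotient.out c) (f.1 (Quotient.out c))
            map_add' := ?_
            map_smul' := ?_ },
          { toFun := fun m => ⟨fun x => φ (σ x⁻¹ m), ?_⟩
            map_add' := ?_
            map_smul' := ?_ }, ?_, ?_, ?_⟩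
  · intro f g
    rw [← Finset.sum_add_distrib]
    refine Finset.sum_congr rfl fun c _ => ?_
    have : (↑(f + g) : G → M) = (f.1 + g.1 : G → M) := rfl
    rw [this, Pi.add_apply, map_add]
  · intro a f
    rw [RingHom.id_apply, Finset.smul_sum]
    refine Finset.sum_congr rfl fun c _ => ?_
    have : (↑(a • f) : G → M) = (a • f.1 : G → M) := rfl
    rw [this, Pi.smul_apply, map_smul]
  · -- membership in Ind
    intro g h
    show φ (σ (g * (h : G))⁻¹ m) = (σ.comp V.subtype) h⁻¹ (φ (σ g⁻¹ m))
    rw [mul_inv_rev, map_mul, Module.End.mul_apply, hφ ((h : G))⁻¹ (V.inv_mem h.2)]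
    rfl
  · intro m m'
    refine Subtype.ext (funext fun x => ?_)
    simp
  · intro a m
    refine Subtype.ext (funext fun x => ?_)
    simp
  · -- equivariance of p
    intro g f
    simp only [LinearMap.coe_mk, AddHom.coe_mk]
    have hterm : ∀ c : G ⧸ V,
        σ (Quotient.out c) ((indRep V (σ.comp V.subtype) g f).1 (Quotient.out c)) =
          σ g (σ (Quotient.out (g⁻¹ • c)) (f.1 (Quotient.out (g⁻¹ • c)))) := by
      intro c
      have happ : (indRep V (σ.comp V.subtype) g f).1 (Quotient.out c) =
          f.1 (g⁻¹ * Quotient.out c) := rfl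
      rw [happ]
      have h2 : σ (Quotient.out c) (f.1 (g⁻¹ * Quotient.out c)) =
          σ g (σ (g⁻¹ * Quotient.out c) (f.1 (g⁻¹ * Quotient.out c))) := by
        rw [← Module.End.mul_apply, ← map_mul, mul_inv_cancel_left]
      rw [h2]
      refine congrArg (σ g) ?_
      refine ind_term_eq σ V f ?_
      rw [← smul_mk, QuotientGroup.out_eq', QuotientGroup.out_eq']
    rw [Finset.sum_congr rfl fun c _ => hterm c]
    rw [← map_sum]
    congr 1
    exact (Fintype.sum_bijective (fun c : G ⧸ V => g⁻¹ • c)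
      (MulAction.bijective g⁻¹) _ _ (fun c => rfl))
  · -- equivariance of s
    intro g m
    refine Subtype.ext (funext fun x => ?_)
    have : (indRep V (σ.comp V.subtype) g
        (⟨fun x => φ (σ x⁻¹ m), by
          intro g' h
          show φ (σ (g' * (h : G))⁻¹ m) = (σ.comp V.subtype) h⁻¹ (φ (σ g'⁻¹ m))
          rw [mul_inv_rev, map_mul, Module.End.mul_apply, hφ ((h : G))⁻¹ (V.inv_mem h.2)]
          rfl⟩ : (Ind V (σ.comp V.subtype) : Submodule k (G → M)))).1 x
        = φ (σ (g⁻¹ * x)⁻¹ m) := rfl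
    simp only [LinearMap.coe_mk, AddHom.coe_mk]
    rw [this]
    congr 1
    rw [mul_inv_rev, inv_inv, map_mul, Module.End.mul_apply]
  · -- p ∘ s = id
    ext m
    simp only [LinearMap.coe_comp, Function.comp_apply, LinearMap.coe_mk, AddHom.coe_mk,
      LinearMap.id_apply]
    have htr' := congrArg (fun ψ : M →ₗ[k] M => ψ m) htr
    simp only [LinearMap.id_apply] at htr'
    calc (∑ c : G ⧸ V, σ (Quotient.out c) (φ (σ (Quotient.out c)⁻¹ m)))
        = (trG σ V φ) m := by rw [trG, LinearMap.sum_apply]; rfl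
      _ = m := htr'

open scoped Classical in
lemma witness_of_relProj (h : IsRelativelyProjective V σ) :
    ∃ φ : M →ₗ[k] M, EquivOn σ V φ ∧ trG σ V φ = LinearMap.id := by
  classical
  obtain ⟨p, s, hp, hs, hps⟩ := h
  have rmem : ∀ (x : G) (f : (Ind V (σ.comp V.subtype) : Submodule k (G → M))),
      (fun y => if x⁻¹ * y ∈ V then f.1 y else 0) ∈ Ind V (σ.comp V.subtype) := by
    intro x f g h
    show (if x⁻¹ * (g * ↑h) ∈ V then f.1 (g * ↑h) else 0) =
      (σ.comp V.subtype) h⁻¹ (if x⁻¹ * g ∈ V then f.1 g else 0)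
    have hc : x⁻¹ * (g * ↑h) ∈ V ↔ x⁻¹ * g ∈ V := by
      rw [← mul_assoc]
      exact mul_mem_cancel_right h.2
    by_cases hg : x⁻¹ * g ∈ V
    · rw [if_pos (hc.mpr hg), if_pos hg, f.2 g h]
    · rw [if_neg (fun hx => hg (hc.mp hx)), if_neg hg, map_zero]
  let r : G → (Ind V (σ.comp V.subtype) : Submodule k (G → M)) →ₗ[k]
      (Ind V (σ.comp V.subtype) : Submodule k (G → M)) := fun x =>
    { toFun := fun f => ⟨fun y => if x⁻¹ * y ∈ V then f.1 y else 0, rmem x f⟩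
      map_add' := by
        intro f g
        refine Subtype.ext (funext fun y => ?_)
        show (if x⁻¹ * y ∈ V then (↑(f + g) : G → M) y else 0)
          = (⟨fun y => if x⁻¹ * y ∈ V then f.1 y else 0, rmem x f⟩
             + ⟨fun y => if x⁻¹ * y ∈ V then g.1 y else 0, rmem x g⟩ :
             (Ind V (σ.comp V.subtype) : Submodule k (G → M))).1 y
        have hco : (↑(f + g) : G → M) y = f.1 y + g.1 y := rfl
        rw [hco]
        by_cases hy : x⁻¹ * y ∈ V
        · simp [hy]
        · simp [hy]
      map_smul' := by
        intro a f
        refine Subtype.ext (funext fun y => ?_)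
        show (if x⁻¹ * y ∈ V then (↑(a • f) : G → M) y else 0)
          = (a • (⟨fun y => if x⁻¹ * y ∈ V then f.1 y else 0, rmem x f⟩ :
             (Ind V (σ.comp V.subtype) : Submodule k (G → M)))).1 y
        have hco : (↑(a • f) : G → M) y = a • f.1 y := rfl
        rw [hco]
        by_cases hy : x⁻¹ * y ∈ V
        · simp [hy]
        · simp [hy] }
  have rapp : ∀ (x : G) (f) (y : G), (r x f).1 y = if x⁻¹ * y ∈ V then f.1 y else 0 :=
    fun x f y => rfl
  have hr1 : ∀ (v : G), v ∈ V → ∀ f, r 1 (indRep V (σ.comp V.subtype) v f)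
      = indRep V (σ.comp V.subtype) v (r 1 f) := by
    intro v hv f
    refine Subtype.ext (funext fun y => ?_)
    show (if (1:G)⁻¹ * y ∈ V then f.1 (v⁻¹ * y) else 0)
      = (if (1:G)⁻¹ * (v⁻¹ * y) ∈ V then f.1 (v⁻¹ * y) else 0)
    simp only [inv_one, one_mul]
    by_cases hy : y ∈ V
    · rw [if_pos hy, if_pos ((mul_mem_cancel_left (V.inv_mem hv)).mpr hy)]
    · rw [if_neg hy, if_neg fun hx => hy ((mul_mem_cancel_left (V.inv_mem hv)).mp hx)]
  have hφequiv : EquivOn σ V (p ∘ₗ r 1 ∘ₗ s) := by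
    intro v hv m
    simp only [LinearMap.comp_apply]
    rw [hs v m, hr1 v hv (s m), hp v (r 1 (s m))]
  have key : ∀ (x : G) (f), r 1 (indRep V (σ.comp V.subtype) x⁻¹ f)
      = indRep V (σ.comp V.subtype) x⁻¹ (r x f) := by
    intro x f
    refine Subtype.ext (funext fun y => ?_)
    show (if (1:G)⁻¹ * y ∈ V then f.1 (x⁻¹⁻¹ * y) else 0)
      = (if x⁻¹ * (x⁻¹⁻¹ * y) ∈ V then f.1 (x⁻¹⁻¹ * y) else 0)
    simp only [inv_one, one_mul, inv_inv, inv_mul_cancel_left]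
  have hsum_r : ∀ f : (Ind V (σ.comp V.subtype) : Submodule k (G → M)),
      (∑ c : G ⧸ V, r (Quotient.out c) f) = f := by
    intro f
    refine Subtype.ext (funext fun y => ?_)
    have hcoe : (↑(∑ c : G ⧸ V, r (Quotient.out c) f) : G → M)
        = ∑ c : G ⧸ V, (↑(r (Quotient.out c) f) : G → M) :=
      map_sum ((Ind V (σ.comp V.subtype)).subtype) _ _
    show (↑(∑ c : G ⧸ V, r (Quotient.out c) f) : G → M) y = f.1 y
    rw [hcoe, Finset.sum_apply]
    have hterm : ∀ c : G ⧸ V, (↑(r (Quotient.out c) f) : G → M) y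
        = if c = QuotientGroup.mk y then f.1 y else 0 := by
      intro c
      rw [rapp]
      by_cases hcy : c = QuotientGroup.mk y
      · rw [if_pos hcy, if_pos]
        exact QuotientGroup.eq.mp (by rw [QuotientGroup.out_eq', hcy])
      · rw [if_neg hcy, if_neg]
        intro hm
        exact hcy (by rw [← QuotientGroup.out_eq' c]; exact QuotientGroup.eq.mpr hm)
    rw [Finset.sum_congr rfl fun c _ => hterm c]
    rw [Finset.sum_ite_eq' Finset.univ (QuotientGroup.mk y) (fun _ => f.1 y)]
    rw [if_pos (Finset.mem_univ _)]
  refine ⟨p ∘ₗ r 1 ∘ₗ s, hφequiv, ?_⟩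
  ext m
  rw [trG, LinearMap.sum_apply, LinearMap.id_apply]
  have hterm2 : ∀ c : G ⧸ V, (cj σ (Quotient.out c) (p ∘ₗ r 1 ∘ₗ s)) m
      = p (r (Quotient.out c) (s m)) := by
    intro c
    rw [cj_apply]
    simp only [LinearMap.comp_apply]
    rw [hs (Quotient.out c)⁻¹ m, key (Quotient.out c) (s m),
      hp (Quotient.out c)⁻¹ _, σ_apply_inv]
  rw [Finset.sum_congr rfl fun c _ => hterm2 c, ← map_sum, hsum_r (s m)]
  exact congrArg (fun ψ : M →ₗ[k] M => ψ m) hps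

end Higman

section Mackey
variable {k : Type*} [CommRing k]
variable {G : Type*} [Group G] [Fintype G]
variable {M : Type*} [AddCommGroup M] [Module k M]
variable (σ : Representation k G M)

lemma cj_comp (x : G) (φ ψ : M →ₗ[k] M) :
    cj σ x (φ ∘ₗ ψ) = cj σ x φ ∘ₗ cj σ x ψ := by
  ext m
  simp only [cj_apply, LinearMap.comp_apply, σ_inv_apply]

lemma cj_comp_gequiv (x : G) {φ β : M →ₗ[k] M} (hβ : GEquiv σ β) :
    cj σ x (φ ∘ₗ β) = cj σ x φ ∘ₗ β := by
  ext m
  simp only [cj_apply, LinearMap.comp_apply]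
  rw [hβ x⁻¹ m]

open scoped Classical in
lemma trG_comp_gequiv (V : Subgroup G) {φ β : M →ₗ[k] M} (hβ : GEquiv σ β) :
    trG σ V (φ ∘ₗ β) = trG σ V φ ∘ₗ β := by
  rw [trG, trG]
  ext m
  rw [LinearMap.comp_apply, LinearMap.sum_apply, LinearMap.sum_apply]
  refine Finset.sum_congr rfl fun c _ => ?_
  rw [cj_comp_gequiv σ _ hβ]
  rfl

lemma equivOn_of_cj {V : Subgroup G} {φ : M →ₗ[k] M} (h : ∀ v ∈ V, cj σ v φ = φ) :
    EquivOn σ V φ := by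
  intro v hv m
  conv_lhs => rw [← h v hv]
  rw [cj_apply, σ_inv_apply]

lemma cj_equivOn {W : Subgroup G} {ψ : M →ₗ[k] M} (hψ : EquivOn σ W ψ) (g : G) :
    EquivOn σ (Subgroup.map (MulAut.conj g).toMonoidHom W) (cj σ g ψ) := by
  refine equivOn_of_cj σ fun u hu => ?_
  obtain ⟨w, hw, rfl⟩ := hu
  have hconj : ((MulAut.conj g).toMonoidHom w) = g * w * g⁻¹ := rfl
  rw [hconj, cj_cj, show g * w * g⁻¹ * g = g * w by group, ← cj_cj, hψ.cj_eq hw]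

lemma equivOn_inf_comp {V U : Subgroup G} {φ α : M →ₗ[k] M} (hφ : EquivOn σ V φ)
    (hα : EquivOn σ U α) : EquivOn σ (V ⊓ U) (φ ∘ₗ α) := by
  intro u hu m
  simp only [LinearMap.comp_apply]
  rw [hα u hu.2 m, hφ u hu.1 (α m)]

/-- The double-coset equivalence relation `y ∈ V x W`. -/
def dosetSetoid (V W : Subgroup G) : Setoid G where
  r x y := ∃ v ∈ V, ∃ w ∈ W, y = v * x * w
  iseqv := by
    constructor
    · intro x
      exact ⟨1, V.one_mem, 1, W.one_mem, by simp⟩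
    · rintro x y ⟨v, hv, w, hw, rfl⟩
      exact ⟨v⁻¹, V.inv_mem hv, w⁻¹, W.inv_mem hw, by group⟩
    · rintro x y z ⟨v, hv, w, hw, rfl⟩ ⟨v', hv', w', hw', rfl⟩
      exact ⟨v' * v, V.mul_mem hv' hv, w * w', W.mul_mem hw hw', by group⟩

open scoped Classical in
/-- Mackey decomposition of a product of relative traces. -/
lemma mackey (V W : Subgroup G) (φ ψ : M →ₗ[k] M) (hφ : EquivOn σ V φ)
    (hψ : EquivOn σ W ψ) :
    trG σ V φ ∘ₗ trG σ W ψ =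
      ∑ ω : Quotient (dosetSetoid V W),
        trG σ (V ⊓ Subgroup.map (MulAut.conj (Quotient.out ω)).toMonoidHom W)
          (φ ∘ₗ cj σ (Quotient.out ω) ψ) := by
  classical
  have lhs : trG σ V φ ∘ₗ trG σ W ψ =
      ∑ cd : (G ⧸ V) × (G ⧸ W),
        cj σ (Quotient.out cd.1) φ ∘ₗ cj σ (Quotient.out cd.2) ψ := by
    ext m
    rw [LinearMap.comp_apply, trG, trG, LinearMap.sum_apply, LinearMap.sum_apply,
      LinearMap.sum_apply, Fintype.sum_prod_type]
    refine Finset.sum_congr rfl fun c _ => ?_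
    rw [map_sum]
    rfl
  rw [lhs]
  set κ : (G ⧸ V) × (G ⧸ W) → Quotient (dosetSetoid V W) :=
    fun cd => Quotient.mk (dosetSetoid V W) ((Quotient.out cd.1)⁻¹ * Quotient.out cd.2)
    with hκ
  rw [← Finset.sum_fiberwise Finset.univ κ
    (fun cd => cj σ (Quotient.out cd.1) φ ∘ₗ cj σ (Quotient.out cd.2) ψ)]
  refine Finset.sum_congr rfl fun ω _ => ?_
  set g : G := Quotient.out ω with hg
  rw [trG]
  refine (Finset.sum_bij
    (fun (u : G ⧸ (V ⊓ Subgroup.map (MulAut.conj g).toMonoidHom W)) _ =>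
      ((QuotientGroup.mk (Quotient.out u) : G ⧸ V),
       (QuotientGroup.mk (Quotient.out u * g) : G ⧸ W)))
    ?_ ?_ ?_ ?_).symm
  · -- maps into the fiber
    intro u _
    rw [Finset.mem_filter]
    refine ⟨Finset.mem_univ _, ?_⟩
    obtain ⟨v, hv⟩ := QuotientGroup.mk_out_eq_mul V (Quotient.out u)
    obtain ⟨w, hw⟩ := QuotientGroup.mk_out_eq_mul W (Quotient.out u * g)
    rw [hκ]
    show Quotient.mk (dosetSetoid V W)
      ((Quotient.out (QuotientGroup.mk (Quotient.out u) : G ⧸ V))⁻¹ *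
        Quotient.out (QuotientGroup.mk (Quotient.out u * g) : G ⧸ W)) = ω
    rw [hv, hw]
    have hout : (Quotient.out u * ↑v)⁻¹ * (Quotient.out u * g * ↑w) = (↑v : G)⁻¹ * g * ↑w := by
      group
    rw [hout, ← Quotient.out_eq ω, ← hg]
    refine Quotient.sound ?_
    exact (dosetSetoid V W).symm ⟨(↑v : G)⁻¹, V.inv_mem v.2, (↑w : G), w.2, rfl⟩
  · -- injective
    intro u₁ _ u₂ _ heq
    have he1 : (QuotientGroup.mk (Quotient.out u₁) : G ⧸ V)
        = QuotientGroup.mk (Quotient.out u₂) := congrArg Prod.fst heq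
    have he2 : (QuotientGroup.mk (Quotient.out u₁ * g) : G ⧸ W)
        = QuotientGroup.mk (Quotient.out u₂ * g) := congrArg Prod.snd heq
    have hv : (Quotient.out u₁)⁻¹ * Quotient.out u₂ ∈ V := QuotientGroup.eq.mp he1
    have hw : (Quotient.out u₁ * g)⁻¹ * (Quotient.out u₂ * g) ∈ W := QuotientGroup.eq.mp he2
    have hmem : (Quotient.out u₁)⁻¹ * Quotient.out u₂
        ∈ V ⊓ Subgroup.map (MulAut.conj g).toMonoidHom W := by
      refine ⟨hv, ⟨(Quotient.out u₁ * g)⁻¹ * (Quotient.out u₂ * g), hw, ?_⟩⟩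
      show g * ((Quotient.out u₁ * g)⁻¹ * (Quotient.out u₂ * g)) * g⁻¹
        = (Quotient.out u₁)⁻¹ * Quotient.out u₂
      group
    rw [← QuotientGroup.out_eq' u₁, ← QuotientGroup.out_eq' u₂]
    exact QuotientGroup.eq.mpr hmem
  · -- surjective
    intro cd hcd
    rw [Finset.mem_filter] at hcd
    have hrel := Quotient.exact (show Quotient.mk (dosetSetoid V W)
        ((Quotient.out cd.1)⁻¹ * Quotient.out cd.2) = Quotient.mk (dosetSetoid V W) g from by
      rw [hg, Quotient.out_eq]; exact hcd.2)
    obtain ⟨v, hv, w, hw, hrel'⟩ := hrel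
    -- hrel' : g = v * ((out cd.1)⁻¹ * out cd.2) * w
    set x : G := Quotient.out cd.1 * v⁻¹ with hx
    refine ⟨QuotientGroup.mk x, Finset.mem_univ _, ?_⟩
    obtain ⟨s', hs'⟩ := QuotientGroup.mk_out_eq_mul
      (V ⊓ Subgroup.map (MulAut.conj g).toMonoidHom W) x
    beta_reduce
    rw [hs']
    obtain ⟨hs1, w', hw', hs2⟩ := s'.2
    -- hs2 : g * w' * g⁻¹ = s'
    have hgoal1 : (QuotientGroup.mk (x * ↑s') : G ⧸ V) = cd.1 := by
      rw [QuotientGroup.mk_mul_of_mem x hs1, hx,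
        QuotientGroup.mk_mul_of_mem _ (V.inv_mem hv), QuotientGroup.out_eq']
    have hgoal2 : (QuotientGroup.mk (x * ↑s' * g) : G ⧸ W) = cd.2 := by
      have hsg : x * ↑s' * g = Quotient.out cd.2 * (w * w') := by
        have hs2' : (↑s' : G) = g * w' * g⁻¹ := hs2.symm
        rw [hx, hs2', hrel']
        group
      rw [hsg, QuotientGroup.mk_mul_of_mem _ (W.mul_mem hw hw'), QuotientGroup.out_eq']
    exact Prod.ext hgoal1 hgoal2
  · -- values agree
    intro u _
    rw [cj_comp, cj_cj, cj_out σ hφ, cj_out σ hψ]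

end Mackey

section Assemble
variable {k : Type*} [Field k]
variable {G : Type*} [Group G] [Fintype G]
variable {M : Type*} [AddCommGroup M] [Module k M] [Module.Finite k M]
variable (σ : Representation k G M)

open scoped Classical in
lemma relProj_inf_conj (hM : IsIndecomposableRep σ) {V W : Subgroup G}
    (hV : IsRelativelyProjective V σ) (hW : IsRelativelyProjective W σ) :
    ∃ g : G, IsRelativelyProjective
      (V ⊓ Subgroup.map (MulAut.conj g).toMonoidHom W) σ := by
  classical
  obtain ⟨φ, hφ, hφtr⟩ := witness_of_relProj σ V hV
  obtain ⟨ψ, hψ, hψtr⟩ := witness_of_relProj σ W hW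
  have hθ : ∀ ω : Quotient (dosetSetoid V W),
      EquivOn σ (V ⊓ Subgroup.map (MulAut.conj (Quotient.out ω)).toMonoidHom W)
        (φ ∘ₗ cj σ (Quotient.out ω) ψ) :=
    fun ω => equivOn_inf_comp σ hφ (cj_equivOn σ hψ (Quotient.out ω))
  have hsum : ∑ ω : Quotient (dosetSetoid V W),
      trG σ (V ⊓ Subgroup.map (MulAut.conj (Quotient.out ω)).toMonoidHom W)
        (φ ∘ₗ cj σ (Quotient.out ω) ψ) = LinearMap.id := by
    rw [← mackey σ V W φ ψ hφ hψ, hφtr, hψtr]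
    ext m
    rfl
  obtain ⟨ω, _, hbij⟩ := exists_bijective_of_sum_eq_id σ hM Finset.univ _
    (fun ω _ => trG_gequiv σ (hθ ω)) hsum
  set U := V ⊓ Subgroup.map (MulAut.conj (Quotient.out ω)).toMonoidHom W with hU
  set e := trG σ U (φ ∘ₗ cj σ (Quotient.out ω) ψ) with he
  have hegeq : GEquiv σ e := trG_gequiv σ (hθ ω)
  set einv := (LinearEquiv.ofBijective e hbij).symm.toLinearMap with hei
  have h1 : ∀ x : M, e (einv x) = x := fun x =>
    (LinearEquiv.ofBijective e hbij).apply_symm_apply x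
  have heinv : GEquiv σ einv := by
    intro g m
    apply hbij.1
    rw [h1, hegeq g (einv m), h1]
  have hη : EquivOn σ U ((φ ∘ₗ cj σ (Quotient.out ω) ψ) ∘ₗ einv) := by
    intro u hu m
    calc ((φ ∘ₗ cj σ (Quotient.out ω) ψ) ∘ₗ einv) (σ u m)
        = (φ ∘ₗ cj σ (Quotient.out ω) ψ) (einv (σ u m)) := rfl
      _ = (φ ∘ₗ cj σ (Quotient.out ω) ψ) (σ u (einv m)) := by rw [heinv u m]
      _ = σ u ((φ ∘ₗ cj σ (Quotient.out ω) ψ) (einv m)) := hθ ω u hu (einv m)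
      _ = σ u (((φ ∘ₗ cj σ (Quotient.out ω) ψ) ∘ₗ einv) m) := rfl
  have htr : trG σ U ((φ ∘ₗ cj σ (Quotient.out ω) ψ) ∘ₗ einv) = LinearMap.id := by
    rw [trG_comp_gequiv σ U heinv, ← he]
    ext m
    exact h1 m
  exact ⟨Quotient.out ω, relProj_of_witness σ U _ hη htr⟩

open scoped Classical in
lemma relProj_sylow (p : ℕ) [Fact p.Prime] [CharP k p] (P : Sylow p G) :
    IsRelativelyProjective (P : Subgroup G) σ := by
  classical
  have hindex : (((P : Subgroup G).index : k)) ≠ 0 := by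
    intro h
    rw [CharP.cast_eq_zero_iff k p] at h
    exact Sylow.not_dvd_index P h
  set a : k := (((P : Subgroup G).index : k))⁻¹ with ha
  refine relProj_of_witness σ P (a • LinearMap.id) (fun v hv m => ?_) ?_
  · simp
  · rw [trG]
    have hterm : ∀ c : G ⧸ (P : Subgroup G),
        cj σ (Quotient.out c) (a • LinearMap.id) = a • LinearMap.id := by
      intro c
      ext m
      simp [cj_apply, σ_apply_inv]
    rw [Finset.sum_congr rfl fun c _ => hterm c, Finset.sum_const, Finset.card_univ]
    ext m
    have hcard : (Fintype.card (G ⧸ (P : Subgroup G))) = (P : Subgroup G).index := by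
      rw [Subgroup.index, Nat.card_eq_fintype_card]
    rw [LinearMap.smul_apply, LinearMap.smul_apply, LinearMap.id_apply,
      ← Nat.cast_smul_eq_nsmul k, smul_smul, hcard, mul_inv_cancel₀ hindex, one_smul]

end Assemble
end Aux
/-- over a field `k` of characteristic `p > 0`, every indecomposable
finite-dimensional `kG`-module `M` has a vertex, i.e. a subgroup `V ≤ G` minimal
such that `M` is a direct summand of `Ind^G_V Res^G_V M`; any two vertices are
conjugate in `G`, and every vertex is a `p`-subgroup of `G`. -/
theorem statement18 (k : Type) [Field k] (p : ℕ) [Fact p.Prime] [CharP k p]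
    (G : Type) [Group G] [Fintype G]
    (M : Type) [AddCommGroup M] [Module k M] [Module.Finite k M]
    (σ : Representation k G M) (hM : IsIndecomposableRep σ) :
    (∃ V : Subgroup G, Minimal (fun W => IsRelativelyProjective W σ) V) ∧
    (∀ V W : Subgroup G, Minimal (fun W' => IsRelativelyProjective W' σ) V →
      Minimal (fun W' => IsRelativelyProjective W' σ) W →
      ∃ g : G, W = Subgroup.map (MulAut.conj g).toMonoidHom V) ∧
    (∀ V : Subgroup G, Minimal (fun W' => IsRelativelyProjective W' σ) V →
      IsPGroup p V) := by
  classical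
  obtain ⟨P⟩ : Nonempty (Sylow p G) := inferInstance
  have hPproj : IsRelativelyProjective (P : Subgroup G) σ := relProj_sylow σ p P
  have hcardmap : ∀ (g : G) (W : Subgroup G),
      Nat.card (Subgroup.map (MulAut.conj g).toMonoidHom W) = Nat.card W := by
    intro g W
    exact (Nat.card_congr
      (W.equivMapOfInjective (MulAut.conj g).toMonoidHom (MulAut.conj g).injective).toEquiv).symm
  have key : ∀ V : Subgroup G, Minimal (fun W' => IsRelativelyProjective W' σ) V →
      ∀ W : Subgroup G, IsRelativelyProjective W σ →
        ∃ g : G, V ≤ Subgroup.map (MulAut.conj g).toMonoidHom W := by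
    intro V hVmin W hW
    obtain ⟨g, hg⟩ := relProj_inf_conj σ hM hVmin.1 hW
    refine ⟨g, ?_⟩
    have hle : V ≤ V ⊓ Subgroup.map (MulAut.conj g).toMonoidHom W := hVmin.2 hg inf_le_left
    exact le_trans hle inf_le_right
  refine ⟨?_, ?_, ?_⟩
  · -- existence of a vertex
    obtain ⟨V, hV, hVmin⟩ := Set.Finite.exists_minimalFor id
      {W : Subgroup G | IsRelativelyProjective W σ} (Set.toFinite _) ⟨(P : Subgroup G), hPproj⟩
    exact ⟨V, hV, fun y hy hle => hVmin hy hle⟩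
  · -- conjugacy of vertices
    intro V W hVmin hWmin
    obtain ⟨g, hgV⟩ := key V hVmin W hWmin.1
    obtain ⟨h, hhW⟩ := key W hWmin V hVmin.1
    have hcVW : Nat.card V ≤ Nat.card W := by
      calc Nat.card V ≤ Nat.card (Subgroup.map (MulAut.conj g).toMonoidHom W) :=
            Subgroup.card_le_of_le hgV
        _ = Nat.card W := hcardmap g W
    have hge : Nat.card (Subgroup.map (MulAut.conj h).toMonoidHom V) ≤ Nat.card W := by
      rw [hcardmap h V]
      exact hcVW
    exact ⟨h, Subgroup.eq_of_le_of_card_ge hhW hge⟩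
  · -- vertices are p-groups
    intro V hVmin
    obtain ⟨g, hgP⟩ := key V hVmin P hPproj
    exact IsPGroup.to_le (P.2.map (MulAut.conj g).toMonoidHom) hgP

end Stmt
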